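/- The reduction system (SF_q) is reduction-unique: for all biwords β₁, β₂, β₃ one has [β₁β₂β₃]_{SF_q} = [β₁·[β₂]_{SF_q}·β₃]_{SF_q}, where the outer leftmost reduction is extended by linearity over the expression [β₂]_{SF_q} placed in the middle. -/

import Mathlib

/-!
Common framework: fix a positive integer `r`; the alphabet `A = {1,…,r}` is modelled
by `Fin r` (the letter `k ∈ A` corresponding to `⟨k-1, _⟩ : Fin r`, with the same
linear order).  A biword is a word in the free monoid on biletters (columns);
`MonoidAlgebra R (Biword r)` is the corresponding large algebra restricted to
finitely supported linear combinations of biwords.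
-/

open LaurentPolynomial

noncomputable section

/-- A biletter: a column `(x over a)` with top letter `x` and bottom letter `a`. -/
abbrev Biletter (r : ℕ) := Fin r × Fin r

/-- A biword: a word of biletters; biwords form the free monoid on biletters,
with identity the empty biword. -/
abbrev Biword (r : ℕ) := FreeMonoid (Biletter r)

/-- The biword with the given list of columns. -/
def ofCols {r : ℕ} (l : List (Biletter r)) : Biword r := FreeMonoid.ofList l

/-- The biword with the given top word and bottom word. -/
def mkBW {r : ℕ} (top bot : List (Fin r)) : Biword r := FreeMonoid.ofList (top.zip bot)

/-- Number of inversions of a word: the number of pairs `i < j` with `w i > w j`. -/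
def wordInv {r : ℕ} : List (Fin r) → ℕ
  | [] => 0
  | a :: l => l.countP (fun b => decide (b < a)) + wordInv l

/-- The non-decreasing rearrangement `w̄` of a word `w`. -/
def sortWord {r : ℕ} (w : List (Fin r)) : List (Fin r) := List.insertionSort (· ≤ ·) w

/-- Top word of a biword. -/
def topWord {r : ℕ} (α : Biword r) : List (Fin r) := (FreeMonoid.toList α).map Prod.fst

/-- Bottom word of a biword. -/
def botWord {r : ℕ} (α : Biword r) : List (Fin r) := (FreeMonoid.toList α).map Prod.snd

/-- Number of exceedances of a biword: the number of columns whose top letter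
strictly exceeds its bottom letter. -/
def excBW {r : ℕ} (α : Biword r) : ℕ :=
  (FreeMonoid.toList α).countP (fun p => decide (p.2 < p.1))

/-- `inv⁻` of a biword: inversions of the bottom word minus inversions of the top word. -/
def invMinus {r : ℕ} (α : Biword r) : ℤ :=
  (wordInv (botWord α) : ℤ) - (wordInv (topWord α) : ℤ)

/-- A circuit: a biword whose top word is a rearrangement of its bottom word. -/
def IsCircuit {r : ℕ} (α : Biword r) : Prop := (topWord α).Perm (botWord α)

/-- An expression is circular if it is a linear combination of circuits. -/
def IsCircular {r : ℕ} {R : Type} [CommRing R] (E : MonoidAlgebra R (Biword r)) : Prop :=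
  ∀ α ∈ E.coeff.support, IsCircuit α

/-- The sorted list `i₁ < i₂ < ⋯ < i_l` of the elements of `J ⊆ A`. -/
def sortedJ {r : ℕ} (J : Finset (Fin r)) : List (Fin r) := J.sort (· ≤ ·)

/-- The permutations of a subset `J` of the alphabet, encoded as the permutations of
the whole alphabet fixing every letter outside `J`. -/
def permsOn (r : ℕ) (J : Finset (Fin r)) : Finset (Equiv.Perm (Fin r)) :=
  Finset.univ.filter fun σ => ∀ i ∉ J, σ i = i

/-- The top word `σ(i₁)…σ(i_l)` of the biword of a permutation `σ` of `J`;
`inv σ` is by definition `wordInv` of this word. -/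
def sigmaTop {r : ℕ} (J : Finset (Fin r)) (σ : Equiv.Perm (Fin r)) :
    List (Fin r) := (sortedJ J).map σ

/-- The biword `(σ(i₁)…σ(i_l) over i₁…i_l)` of a permutation `σ` of `J`. -/
def sigmaBW {r : ℕ} (J : Finset (Fin r)) (σ : Equiv.Perm (Fin r)) :
    Biword r := mkBW (sigmaTop J σ) (sortedJ J)

/-- A word of biletters is irreducible for a reduction system (given as the partial
function `rule` assigning to each length-2 left-hand side its right-hand side) if
none of its length-2 factors is a left-hand side. -/
def IrredWord {r : ℕ} {R : Type} [CommRing R]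
    (rule : Biletter r → Biletter r → Option (MonoidAlgebra R (Biword r)))
    (l : List (Biletter r)) : Prop :=
  List.Chain' (fun c d => rule c d = none) l

/-- `red` is the leftmost reduction associated with the reduction system `rule`:
the `R`-linear endomorphism of the biword algebra determined recursively by
`red β = β` for `β` irreducible, and `red (β₁ γ β₂) = red (β₁ ⬝ E_γ ⬝ β₂)` whenever
`γ = cd` is the leftmost length-2 factor of `β₁ γ β₂` that is a left-hand side
(leftmost-ness being expressed by irreducibility of `β₁ ++ [c]`), with `E_γ` the
corresponding right-hand side.  (The recursion terminates, so such a map exists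
and is unique.) -/
structure IsLeftmostReduction {r : ℕ} {R : Type} [CommRing R]
    (rule : Biletter r → Biletter r → Option (MonoidAlgebra R (Biword r)))
    (red : MonoidAlgebra R (Biword r) →ₗ[R] MonoidAlgebra R (Biword r)) : Prop where
  map_irred : ∀ l : List (Biletter r), IrredWord rule l →
    red (MonoidAlgebra.single (ofCols l) 1) = MonoidAlgebra.single (ofCols l) 1
  map_step : ∀ (l₁ : List (Biletter r)) (c d : Biletter r)
      (E : MonoidAlgebra R (Biword r)) (l₂ : List (Biletter r)),
    rule c d = some E → IrredWord rule (l₁ ++ [c]) →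
    red (MonoidAlgebra.single (ofCols (l₁ ++ c :: d :: l₂)) 1)
      = red (MonoidAlgebra.single (ofCols l₁) 1 * E * MonoidAlgebra.single (ofCols l₂) 1)

/-- Degree-`n` component `FB_n(1)` of `Ferm(1) ⬝ Bos(1)`, with coefficients in `ℤ`:
the sum over triples `(J, σ, w)` with `|J| + length w = n` of
`(-1)^{|J|} (-1)^{inv σ} ⬝ (biword of σ) ⬝ (w̄ over w)`. -/
def FB1 (r n : ℕ) : MonoidAlgebra ℤ (Biword r) :=
  ∑ J : Finset (Fin r), ∑ σ ∈ permsOn r J,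
    if J.card ≤ n then
      ∑ w : Fin (n - J.card) → Fin r,
        MonoidAlgebra.single
          (sigmaBW J σ * mkBW (sortWord (List.ofFn w)) (List.ofFn w))
          ((-1 : ℤ) ^ (J.card + wordInv (sigmaTop J σ)))
    else 0

/-- Degree-`n` component `FB_n(1)` of `Ferm(1) ⬝ Bos(1)`, with coefficients in
`ℤ[q,q⁻¹]` (the specialization `q = 1` of `FB_n(q)`). -/
def FB1q (r n : ℕ) : MonoidAlgebra (LaurentPolynomial ℤ) (Biword r) :=
  ∑ J : Finset (Fin r), ∑ σ ∈ permsOn r J,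
    if J.card ≤ n then
      ∑ w : Fin (n - J.card) → Fin r,
        MonoidAlgebra.single
          (sigmaBW J σ * mkBW (sortWord (List.ofFn w)) (List.ofFn w))
          ((-1 : LaurentPolynomial ℤ) ^ (J.card + wordInv (sigmaTop J σ)))
    else 0

/-- Degree-`n` component `FB_n(q)` of `Ferm(q) ⬝ Bos(q)`, with coefficients in
`ℤ[q,q⁻¹]` (with `q` the Laurent variable `T 1`): the coefficient of the biword
`(biword of σ) ⬝ (w̄ over w)` is `(-1)^{|J|} (-q)^{-inv σ} q^{inv w}
= (-1)^{|J| + inv σ} q^{inv w - inv σ}`. -/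
def FBq (r n : ℕ) : MonoidAlgebra (LaurentPolynomial ℤ) (Biword r) :=
  ∑ J : Finset (Fin r), ∑ σ ∈ permsOn r J,
    if J.card ≤ n then
      ∑ w : Fin (n - J.card) → Fin r,
        MonoidAlgebra.single
          (sigmaBW J σ * mkBW (sortWord (List.ofFn w)) (List.ofFn w))
          ((-1 : LaurentPolynomial ℤ) ^ (J.card + wordInv (sigmaTop J σ)) *
            T ((wordInv (List.ofFn w) : ℤ) - (wordInv (sigmaTop J σ) : ℤ)))
    else 0

/-- The ring `ℤ[t,t⁻¹,q,q⁻¹]`, realized as Laurent polynomials in `q` over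
Laurent polynomials in `t`. -/
abbrev Rtq : Type := LaurentPolynomial (LaurentPolynomial ℤ)

/-- The variable `q` of `ℤ[t,t⁻¹,q,q⁻¹]`. -/
def qv : Rtq := T 1
/-- The variable `t` of `ℤ[t,t⁻¹,q,q⁻¹]`. -/
def tv : Rtq := C (T 1)
/-- `t^k` for `k : ℤ`. -/
def tpow (k : ℤ) : Rtq := C (T k)
/-- `q^k` for `k : ℤ`. -/
def qpow (k : ℤ) : Rtq := T k

/-- Degree-`n` component `FB_n(t,q)` of `Ferm(t,q) ⬝ Bos(t,q)`, with coefficients in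
`ℤ[t,t⁻¹,q,q⁻¹]`: the coefficient of `(biword of σ) ⬝ (w̄ over w)` is
`(-1)^{|J|} t^{exc(biword of σ)} (-q)^{-inv σ} ⬝ t^{exc(w̄ over w)} q^{inv w}`. -/
def FBtq (r n : ℕ) : MonoidAlgebra Rtq (Biword r) :=
  ∑ J : Finset (Fin r), ∑ σ ∈ permsOn r J,
    if J.card ≤ n then
      ∑ w : Fin (n - J.card) → Fin r,
        MonoidAlgebra.single
          (sigmaBW J σ * mkBW (sortWord (List.ofFn w)) (List.ofFn w))
          ((-1 : Rtq) ^ (J.card + wordInv (sigmaTop J σ)) *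
            tpow ((excBW (sigmaBW J σ) : ℤ) +
              (excBW (mkBW (sortWord (List.ofFn w)) (List.ofFn w)) : ℤ)) *
            qpow ((wordInv (List.ofFn w) : ℤ) - (wordInv (sigmaTop J σ) : ℤ)))
    else 0

/-- The reduction system `(SF_q)` over `ℤ[t,t⁻¹,q,q⁻¹]`: for `x>y`,
`(xy over ab) → (yx over ba)` if `a>b`, `(xy over aa) → q⬝(yx over aa)`, and
`(xy over ab) → q²⬝(yx over ba)` if `a<b`. -/
def SFqrule (r : ℕ) (c d : Biletter r) : Option (MonoidAlgebra Rtq (Biword r)) :=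
  if d.1 < c.1 then
    if d.2 < c.2 then some (MonoidAlgebra.single (ofCols [d, c]) 1)
    else if c.2 = d.2 then some (MonoidAlgebra.single (ofCols [d, c]) qv)
    else some (MonoidAlgebra.single (ofCols [d, c]) (qv ^ 2))
  else none

/-- Generators of the two-sided ideal `I(SF_q)` of `𝒜_{t,q}`: for `x>y`,
`(xy over ab) − (yx over ba)` if `a>b`, `(xy over aa) − q⬝(yx over aa)`, and
`(xy over ab) − q²⬝(yx over ba)` if `a<b`. -/
def SFqgens (r : ℕ) : Set (MonoidAlgebra Rtq (Biword r)) :=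
  {E | (∃ x y a b : Fin r, y < x ∧ b < a ∧
          E = MonoidAlgebra.single (mkBW [x, y] [a, b]) 1
             - MonoidAlgebra.single (mkBW [y, x] [b, a]) 1) ∨
       (∃ x y a : Fin r, y < x ∧
          E = MonoidAlgebra.single (mkBW [x, y] [a, a]) 1
             - MonoidAlgebra.single (mkBW [y, x] [a, a]) qv) ∨
       (∃ x y a b : Fin r, y < x ∧ a < b ∧
          E = MonoidAlgebra.single (mkBW [x, y] [a, b]) 1
             - MonoidAlgebra.single (mkBW [y, x] [b, a]) (qv ^ 2))}


section Aux
open List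

variable {r : ℕ}

/-- weight of an inverted pair of columns -/
def pW (c d : Biletter r) : ℕ :=
  if d.1 < c.1 then (if d.2 < c.2 then 0 else if c.2 = d.2 then 1 else 2) else 0

/-- total q-weight of a list of columns -/
def Wt : List (Biletter r) → ℕ
  | [] => 0
  | c :: l => (l.map (pW c)).sum + Wt l

abbrev keyle (c d : Biletter r) : Prop := c.1 ≤ d.1

instance : IsTrans (Biletter r) keyle := ⟨fun _ _ _ => le_trans⟩

def sortCols (l : List (Biletter r)) : List (Biletter r) := l.insertionSort keyle

lemma oi_swap {c d : Biletter r} (h : d.1 < c.1) :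
    ∀ L : List (Biletter r),
      orderedInsert keyle d (orderedInsert keyle c L)
        = orderedInsert keyle c (orderedInsert keyle d L)
  | [] => by
      simp only [orderedInsert]
      rw [if_pos (le_of_lt h : keyle d c), if_neg (not_le.2 h : ¬ keyle c d)]
  | e :: L => by
      by_cases hce : keyle c e
      · have hde : keyle d e := le_trans (le_of_lt h) hce
        rw [orderedInsert, if_pos hce, orderedInsert, if_pos (le_of_lt h : keyle d c),
          orderedInsert, if_pos hde, orderedInsert, if_neg (not_le.2 h : ¬ keyle c d),
          orderedInsert, if_pos hce]
      · by_cases hde : keyle d e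
        · rw [orderedInsert, if_neg hce, orderedInsert, if_pos hde,
            orderedInsert, if_pos hde, orderedInsert, if_neg (not_le.2 h : ¬ keyle c d),
            orderedInsert, if_neg hce]
        · rw [orderedInsert, if_neg hce, orderedInsert, if_neg hde,
            orderedInsert, if_neg hde, orderedInsert, if_neg hce, oi_swap h L]

lemma sort_swap {c d : Biletter r} (h : d.1 < c.1) :
    ∀ (p s : List (Biletter r)),
      sortCols (p ++ c :: d :: s) = sortCols (p ++ d :: c :: s)
  | [], s => by
      simp only [sortCols, nil_append, insertionSort]
      exact (oi_swap h _).symm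
  | a :: p, s => by
      simpa only [sortCols, cons_append, insertionSort_cons] using
        congrArg (orderedInsert keyle a) (sort_swap h p s)

lemma Wt_swap {c d : Biletter r} (h : d.1 < c.1) :
    ∀ (p s : List (Biletter r)),
      Wt (p ++ c :: d :: s) = pW c d + Wt (p ++ d :: c :: s)
  | [], s => by
      have hdc : pW d c = 0 := by
        unfold pW; rw [if_neg (by omega : ¬ c.1 < d.1)]
      simp only [nil_append, Wt, map_cons, sum_cons, hdc]
      ring
  | a :: p, s => by
      have hperm : (p ++ c :: d :: s) ~ (p ++ d :: c :: s) :=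
        Perm.append_left p (Perm.swap d c s)
      simp only [cons_append, Wt, List.append_eq]
      rw [Wt_swap h p s, (hperm.map (pW a)).sum_eq]
      ring

lemma wordInv_swap {x y : Fin r} (h : y < x) :
    ∀ (p s : List (Fin r)),
      wordInv (p ++ x :: y :: s) = wordInv (p ++ y :: x :: s) + 1
  | [], s => by
      simp only [nil_append, wordInv, countP_cons]
      rw [if_pos (by simpa using h), if_neg (by simp [not_lt.2 (le_of_lt h)])]
      ring
  | a :: p, s => by
      have hperm : (p ++ x :: y :: s) ~ (p ++ y :: x :: s) :=
        Perm.append_left p (Perm.swap y x s)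
      simp only [cons_append, wordInv, List.append_eq]
      rw [wordInv_swap h p s, hperm.countP_eq]
      ring

lemma Wt_of_sorted : ∀ {l : List (Biletter r)}, l.Pairwise keyle → Wt l = 0
  | [], _ => rfl
  | c :: l, h => by
      simp only [Wt, Wt_of_sorted (pairwise_cons.1 h).2, add_zero]
      rw [List.sum_eq_zero]
      intro w hw
      obtain ⟨d, hd, rfl⟩ := List.mem_map.1 hw
      unfold pW
      rw [if_neg (not_lt.2 ((pairwise_cons.1 h).1 d hd))]

lemma exists_leftmost : ∀ l : List (Biletter r), ¬ l.Chain' keyle →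
    ∃ l₁ c d l₂, l = l₁ ++ c :: d :: l₂ ∧ (l₁ ++ [c]).Chain' keyle ∧ d.1 < c.1
  | [], h => absurd isChain_nil h
  | [c], h => absurd (isChain_singleton c) h
  | c :: d :: t, h => by
      by_cases hcd : d.1 < c.1
      · exact ⟨[], c, d, t, rfl, isChain_singleton c, hcd⟩
      · have h' : ¬ (d :: t).Chain' keyle := fun hc =>
          h (hc.cons_cons (not_lt.1 hcd))
        obtain ⟨l₁, c', d', l₂, heq, hch, hlt⟩ := exists_leftmost (d :: t) h'
        refine ⟨c :: l₁, c', d', l₂, by rw [heq]; rfl, ?_, hlt⟩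
        refine hch.cons ?_
        intro z hz
        cases l₁ with
        | nil =>
          obtain rfl : c' = d := by simpa using (congrArg List.head? heq).symm
          obtain rfl : c' = z := by simpa using hz
          exact not_lt.1 hcd
        | cons a l =>
          obtain rfl : a = d := by simpa using (congrArg List.head? heq).symm
          obtain rfl : a = z := by simpa using hz
          exact not_lt.1 hcd

lemma rule_none_of_keyle {c d : Biletter r} (h : keyle c d) : SFqrule r c d = none := by
  unfold SFqrule; rw [if_neg (not_lt.2 h)]

lemma irred_of_chain {l : List (Biletter r)} (h : l.Chain' keyle) :
    IrredWord (SFqrule r) l :=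
  List.IsChain.imp (fun _ _ hk => rule_none_of_keyle hk) h

lemma rule_some_eq {c d : Biletter r} (h : d.1 < c.1) :
    SFqrule r c d = some (MonoidAlgebra.single (ofCols [d, c]) (qv ^ pW c d)) := by
  unfold SFqrule pW
  rw [if_pos h, if_pos h]
  by_cases h1 : d.2 < c.2
  · rw [if_pos h1, if_pos h1, pow_zero]
  · rw [if_neg h1, if_neg h1]
    by_cases h2 : c.2 = d.2
    · rw [if_pos h2, if_pos h2, pow_one]
    · rw [if_neg h2, if_neg h2]

lemma ofCols_append (a b : List (Biletter r)) : ofCols (a ++ b) = ofCols a * ofCols b := rfl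

lemma map_fst_split (l₁ : List (Biletter r)) (c d : Biletter r) (l₂ : List (Biletter r)) :
    (l₁ ++ c :: d :: l₂).map Prod.fst
      = l₁.map Prod.fst ++ c.1 :: d.1 :: l₂.map Prod.fst := by
  simp

lemma red_normal
    (red : MonoidAlgebra Rtq (Biword r) →ₗ[Rtq] MonoidAlgebra Rtq (Biword r))
    (hred : IsLeftmostReduction (SFqrule r) red) :
    ∀ (n : ℕ) (l : List (Biletter r)), wordInv (l.map Prod.fst) ≤ n →
    red (MonoidAlgebra.single (ofCols l) 1)
      = MonoidAlgebra.single (ofCols (sortCols l)) (qv ^ Wt l) := by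
  have sorted_case : ∀ l : List (Biletter r), l.Chain' keyle →
      red (MonoidAlgebra.single (ofCols l) 1)
        = MonoidAlgebra.single (ofCols (sortCols l)) (qv ^ Wt l) := by
    intro l hc
    have hp : l.Pairwise keyle := isChain_iff_pairwise.mp hc
    rw [Wt_of_sorted hp, pow_zero, sortCols, Pairwise.insertionSort_eq hp]
    exact hred.map_irred l (irred_of_chain hc)
  intro n
  induction n with
  | zero =>
    intro l hl
    by_cases hc : l.Chain' keyle
    · exact sorted_case l hc
    · exfalso
      obtain ⟨l₁, c, d, l₂, rfl, _, hlt⟩ := exists_leftmost l hc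
      have := wordInv_swap hlt (l₁.map Prod.fst) (l₂.map Prod.fst)
      rw [map_fst_split] at hl
      omega
  | succ n IH =>
    intro l hl
    by_cases hc : l.Chain' keyle
    · exact sorted_case l hc
    · obtain ⟨l₁, c, d, l₂, rfl, hch, hlt⟩ := exists_leftmost l hc
      have hstep := hred.map_step l₁ c d _ l₂ (rule_some_eq hlt) (irred_of_chain hch)
      rw [hstep]
      have hmul : MonoidAlgebra.single (ofCols l₁) (1 : Rtq)
            * MonoidAlgebra.single (ofCols [d, c]) (qv ^ pW c d)
            * MonoidAlgebra.single (ofCols l₂) 1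
          = MonoidAlgebra.single (ofCols (l₁ ++ d :: c :: l₂)) (qv ^ pW c d) := by
        rw [MonoidAlgebra.single_mul_single, MonoidAlgebra.single_mul_single,
          one_mul, mul_one]
        congr 1
        rw [show l₁ ++ d :: c :: l₂ = l₁ ++ [d, c] ++ l₂ by simp,
          ofCols_append, ofCols_append]
      rw [hmul]
      have hsmul : MonoidAlgebra.single (ofCols (l₁ ++ d :: c :: l₂)) (qv ^ pW c d : Rtq)
          = (qv ^ pW c d) • MonoidAlgebra.single (ofCols (l₁ ++ d :: c :: l₂)) 1 := by
        rw [MonoidAlgebra.smul_single', mul_one]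
      have hinv : wordInv ((l₁ ++ d :: c :: l₂).map Prod.fst) ≤ n := by
        have := wordInv_swap hlt (l₁.map Prod.fst) (l₂.map Prod.fst)
        rw [map_fst_split] at hl
        rw [map_fst_split]
        omega
      rw [hsmul, map_smul, IH _ hinv, MonoidAlgebra.smul_single',
        sort_swap hlt, Wt_swap hlt, pow_add]

lemma middle_sort :
    ∀ (n : ℕ) (β₂ : List (Biletter r)), wordInv (β₂.map Prod.fst) ≤ n →
    ∀ β₁ β₃ : List (Biletter r),
      sortCols (β₁ ++ β₂ ++ β₃) = sortCols (β₁ ++ sortCols β₂ ++ β₃) ∧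
      Wt (β₁ ++ β₂ ++ β₃) = Wt β₂ + Wt (β₁ ++ sortCols β₂ ++ β₃) := by
  have sorted_case : ∀ β₂ : List (Biletter r), β₂.Chain' keyle →
      ∀ β₁ β₃ : List (Biletter r),
      sortCols (β₁ ++ β₂ ++ β₃) = sortCols (β₁ ++ sortCols β₂ ++ β₃) ∧
      Wt (β₁ ++ β₂ ++ β₃) = Wt β₂ + Wt (β₁ ++ sortCols β₂ ++ β₃) := by
    intro β₂ hc β₁ β₃
    have hp : β₂.Pairwise keyle := isChain_iff_pairwise.mp hc
    rw [show sortCols β₂ = β₂ from Pairwise.insertionSort_eq hp, Wt_of_sorted hp, zero_add]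
    exact ⟨rfl, rfl⟩
  intro n
  induction n with
  | zero =>
    intro β₂ hl β₁ β₃
    by_cases hc : β₂.Chain' keyle
    · exact sorted_case β₂ hc β₁ β₃
    · exfalso
      obtain ⟨l₁, c, d, l₂, rfl, _, hlt⟩ := exists_leftmost β₂ hc
      have := wordInv_swap hlt (l₁.map Prod.fst) (l₂.map Prod.fst)
      rw [map_fst_split] at hl
      omega
  | succ n IH =>
    intro β₂ hl β₁ β₃
    by_cases hc : β₂.Chain' keyle
    · exact sorted_case β₂ hc β₁ β₃
    · obtain ⟨l₁, c, d, l₂, rfl, _, hlt⟩ := exists_leftmost β₂ hc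
      set β₂' := l₁ ++ d :: c :: l₂ with hβ₂'
      have hinv : wordInv (β₂'.map Prod.fst) ≤ n := by
        have := wordInv_swap hlt (l₁.map Prod.fst) (l₂.map Prod.fst)
        rw [map_fst_split] at hl
        rw [hβ₂', map_fst_split]
        omega
      obtain ⟨hs, hw⟩ := IH β₂' hinv β₁ β₃
      have hsort2 : sortCols (l₁ ++ c :: d :: l₂) = sortCols β₂' := sort_swap hlt l₁ l₂
      have hW2 : Wt (l₁ ++ c :: d :: l₂) = pW c d + Wt β₂' := Wt_swap hlt l₁ l₂
      have hassoc1 : β₁ ++ (l₁ ++ c :: d :: l₂) ++ β₃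
          = (β₁ ++ l₁) ++ c :: d :: (l₂ ++ β₃) := by simp
      have hassoc2 : β₁ ++ β₂' ++ β₃ = (β₁ ++ l₁) ++ d :: c :: (l₂ ++ β₃) := by
        rw [hβ₂']; simp
      constructor
      · rw [hassoc1, sort_swap hlt, ← hassoc2, hs, hsort2]
      · rw [hassoc1, Wt_swap hlt, ← hassoc2, hw, hW2, hsort2]
        ring

end Aux

/-- The reduction system `(SF_q)` is reduction-unique: for all biwords
`β₁, β₂, β₃`, `[β₁β₂β₃]_{SF_q} = [β₁ ⬝ [β₂]_{SF_q} ⬝ β₃]_{SF_q}`. -/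
theorem SFq_reduction_unique (r : ℕ)
    (red : MonoidAlgebra Rtq (Biword r) →ₗ[Rtq] MonoidAlgebra Rtq (Biword r))
    (hred : IsLeftmostReduction (SFqrule r) red)
    (β₁ β₂ β₃ : List (Biletter r)) :
    red (MonoidAlgebra.single (ofCols (β₁ ++ β₂ ++ β₃)) 1)
      = red (MonoidAlgebra.single (ofCols β₁) 1
          * red (MonoidAlgebra.single (ofCols β₂) 1)
          * MonoidAlgebra.single (ofCols β₃) 1) := by
  have key : ∀ l : List (Biletter r),
      red (MonoidAlgebra.single (ofCols l) 1)
        = MonoidAlgebra.single (ofCols (sortCols l)) (qv ^ Wt l) :=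
    fun l => red_normal red hred _ l le_rfl
  obtain ⟨hs, hw⟩ := middle_sort (wordInv (β₂.map Prod.fst)) β₂ le_rfl β₁ β₃
  rw [key, key β₂, MonoidAlgebra.single_mul_single, MonoidAlgebra.single_mul_single,
    one_mul, mul_one]
  have hof : ofCols β₁ * ofCols (sortCols β₂) * ofCols β₃
      = ofCols (β₁ ++ sortCols β₂ ++ β₃) := by
    rw [ofCols_append, ofCols_append]
  rw [hof, show MonoidAlgebra.single (ofCols (β₁ ++ sortCols β₂ ++ β₃)) (qv ^ Wt β₂ : Rtq)
      = (qv ^ Wt β₂) • MonoidAlgebra.single (ofCols (β₁ ++ sortCols β₂ ++ β₃)) 1 by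
    rw [MonoidAlgebra.smul_single', mul_one], map_smul, key,
    MonoidAlgebra.smul_single', hs, hw, pow_add]
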